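/- For all n ≥ 3, all l with 2 ≤ l ≤ n-1, and all k with 1 ≤ k ≤ n-l+1, one has |A^{(n)}_{l;k} ∩ S_n^sep| = |S_{n-l+1}^sep| · |S_l^sep|; equivalently, under the uniform probability measure P_n^sep on S_n^sep, P_n^sep(A^{(n)}_{l;k}) = |S_{n-l+1}^sep|·|S_l^sep| / |S_n^sep|. -/
import Mathlib

open Filter

def Contains {n m : ℕ} (σ : Fin n → Fin n) (τ : Fin m → Fin m) : Prop :=
  ∃ f : Fin m → Fin n, StrictMono f ∧ ∀ j k : Fin m, σ (f j) < σ (f k) ↔ τ j < τ k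

def Avoids {n m : ℕ} (σ : Fin n → Fin n) (τ : Fin m → Fin m) : Prop :=
  ¬ Contains σ τ

def AvoidSet (n : ℕ) {m : ℕ} (τ : Equiv.Perm (Fin m)) : Set (Equiv.Perm (Fin n)) :=
  {σ : Equiv.Perm (Fin n) | Avoids ⇑σ ⇑τ}

def ClusterAt {n : ℕ} (l k a : ℕ) (σ : Equiv.Perm (Fin n)) : Prop :=
  (Finset.univ.filter fun i : Fin n => a ≤ (i : ℕ) + 1 ∧ (i : ℕ) + 1 < a + l).image
      (fun i => (σ i : ℕ) + 1) = Finset.Ico k (k + l)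

def ClusterEvent (n l k : ℕ) : Set (Equiv.Perm (Fin n)) :=
  {σ : Equiv.Perm (Fin n) | ∃ a : ℕ, 1 ≤ a ∧ a ≤ n - l + 1 ∧ ClusterAt l k a σ}

def ClusterFree {m : ℕ} (τ : Equiv.Perm (Fin m)) : Prop :=
  ∀ l a k : ℕ, 2 ≤ l → l ≤ m - 1 → 1 ≤ a → a + l ≤ m + 1 → ¬ ClusterAt l k a τ

def ContainsTightly12 {m : ℕ} (τ : Equiv.Perm (Fin m)) : Prop :=
  ∃ i j : Fin m, (j : ℕ) = (i : ℕ) + 1 ∧ (τ j : ℕ) = (τ i : ℕ) + 1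

def ContainsTightly21 {m : ℕ} (τ : Equiv.Perm (Fin m)) : Prop :=
  ∃ i j : Fin m, (j : ℕ) = (i : ℕ) + 1 ∧ (τ i : ℕ) = (τ j : ℕ) + 1

def perm123 : Equiv.Perm (Fin 3) := Equiv.refl (Fin 3)

def perm321 : Equiv.Perm (Fin 3) :=
  ⟨![2, 1, 0], ![2, 1, 0], by intro x; fin_cases x <;> rfl, by intro x; fin_cases x <;> rfl⟩

def p2413 : Equiv.Perm (Fin 4) :=
  ⟨![1, 3, 0, 2], ![2, 0, 3, 1], by intro x; fin_cases x <;> rfl, by intro x; fin_cases x <;> rfl⟩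

def p3142 : Equiv.Perm (Fin 4) :=
  ⟨![2, 0, 3, 1], ![1, 3, 0, 2], by intro x; fin_cases x <;> rfl, by intro x; fin_cases x <;> rfl⟩

def SepSet (n : ℕ) : Set (Equiv.Perm (Fin n)) :=
  {σ : Equiv.Perm (Fin n) | Avoids ⇑σ ⇑p2413 ∧ Avoids ⇑σ ⇑p3142}


set_option linter.unusedSectionVars false
set_option linter.unusedVariables false

def ap {m : ℕ} (σ : Equiv.Perm (Fin m)) (i : ℕ) : ℕ :=
  if h : i < m then (σ ⟨i, h⟩ : ℕ) else 0

lemma ap_lt {m : ℕ} (σ : Equiv.Perm (Fin m)) {i : ℕ} (h : i < m) : ap σ i < m := by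
  simp only [ap, dif_pos h]; exact (σ ⟨i, h⟩).isLt

lemma ap_inj {m : ℕ} (σ : Equiv.Perm (Fin m)) {i j : ℕ} (hi : i < m) (hj : j < m)
    (h : ap σ i = ap σ j) : i = j := by
  simp only [ap, dif_pos hi, dif_pos hj] at h
  have := σ.injective (Fin.ext h)
  exact congrArg Fin.val this

lemma ap_surj {m : ℕ} (σ : Equiv.Perm (Fin m)) {v : ℕ} (hv : v < m) :
    ∃ i, i < m ∧ ap σ i = v := by
  refine ⟨(σ⁻¹ ⟨v, hv⟩ : Fin m), (σ⁻¹ ⟨v, hv⟩).isLt, ?_⟩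
  simp [ap]

lemma ap_fin {m : ℕ} (σ : Equiv.Perm (Fin m)) (i : Fin m) : ap σ (i : ℕ) = (σ i : ℕ) := by
  simp [ap]

def vE (l k0 v : ℕ) : ℕ := if v ≤ k0 then v else v + (l - 1)

def vC (l k0 v : ℕ) : ℕ := if v < k0 then v else if v < k0 + l then k0 else v - (l - 1)

def cp (l a0 p : ℕ) : ℕ := if p < a0 then p else if p < a0 + l then a0 else p - (l - 1)

def pEm (l a0 p : ℕ) : ℕ := if p ≤ a0 then p else p + (l - 1)

lemma vE_lt_vE {l k0 u v : ℕ} : vE l k0 u < vE l k0 v ↔ u < v := by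
  unfold vE; split_ifs <;> omega

lemma vC_vE {l k0 v : ℕ} (hl : 1 ≤ l) : vC l k0 (vE l k0 v) = v := by
  unfold vC vE; split_ifs <;> omega

lemma vC_lt_out {l k0 u v : ℕ} (h : ¬((k0 ≤ u ∧ u < k0 + l) ∧ (k0 ≤ v ∧ v < k0 + l))) :
    vC l k0 u < vC l k0 v ↔ u < v := by
  unfold vC; split_ifs <;> omega

section Infl

variable {n m l k0 a0 : ℕ}

/-- inflation at the `ℕ` level -/
def nflF (k0 a0 : ℕ) {m l : ℕ} (σ' : Equiv.Perm (Fin m)) (π : Equiv.Perm (Fin l)) (i : ℕ) : ℕ :=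
  if i < a0 then vE l k0 (ap σ' i)
  else if i < a0 + l then k0 + ap π (i - a0)
  else vE l k0 (ap σ' (i - (l - 1)))

variable (σ' : Equiv.Perm (Fin m)) (π : Equiv.Perm (Fin l))
variable (hn : n = m + l - 1) (hl : 2 ≤ l) (hk0 : k0 < m) (ha0 : a0 < m)
  (hb : ap σ' a0 = k0)

include hn hl hk0 ha0 in
lemma nfl_lt {i : ℕ} (hi : i < n) : nflF k0 a0 σ' π i < n := by
  unfold nflF
  split_ifs with h1 h2
  · have := ap_lt σ' (show i < m by omega)
    unfold vE; split_ifs <;> omega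
  · have := ap_lt π (show i - a0 < l by omega)
    omega
  · have := ap_lt σ' (show i - (l - 1) < m by omega)
    unfold vE; split_ifs <;> omega

include hn hl hk0 ha0 hb in
lemma nfl_block_iff {i : ℕ} (hi : i < n) :
    (k0 ≤ nflF k0 a0 σ' π i ∧ nflF k0 a0 σ' π i < k0 + l) ↔ (a0 ≤ i ∧ i < a0 + l) := by
  unfold nflF
  split_ifs with h1 h2
  · have hap := ap_lt σ' (show i < m by omega)
    have hne : ap σ' i ≠ k0 := fun he =>
      absurd (ap_inj σ' (show i < m by omega) ha0 (he.trans hb.symm)) (by omega)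
    unfold vE; split_ifs <;> omega
  · have := ap_lt π (show i - a0 < l by omega)
    omega
  · have hj : i - (l - 1) < m := by omega
    have hap := ap_lt σ' hj
    have hne : ap σ' (i - (l - 1)) ≠ k0 := fun he =>
      absurd (ap_inj σ' hj ha0 (he.trans hb.symm)) (by omega)
    unfold vE; split_ifs <;> omega

lemma cp_lt (hn : n = m + l - 1) (hl : 2 ≤ l) (ha0 : a0 < m) {i : ℕ} (hi : i < n) :
    cp l a0 i < m := by
  unfold cp; split_ifs <;> omega

omit hk0 in include hn hl ha0 in
lemma nfl_out {i : ℕ} (hi : i < n) (hout : ¬(a0 ≤ i ∧ i < a0 + l)) :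
    nflF k0 a0 σ' π i = vE l k0 (ap σ' (cp l a0 i)) := by
  unfold nflF cp
  split_ifs <;> first | rfl | omega

include hn hl hk0 ha0 hb in
lemma nfl_cp_ne {i : ℕ} (hi : i < n) (hout : ¬(a0 ≤ i ∧ i < a0 + l)) :
    ap σ' (cp l a0 i) ≠ k0 := by
  intro he
  have h1 : cp l a0 i = a0 := ap_inj σ' (cp_lt hn hl ha0 hi) ha0 (he.trans hb.symm)
  unfold cp at h1; split_ifs at h1 <;> omega

include hn hl hk0 ha0 hb in
lemma nfl_inj {i j : ℕ} (hi : i < n) (hj : j < n)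
    (h : nflF k0 a0 σ' π i = nflF k0 a0 σ' π j) : i = j := by
  by_cases hbi : a0 ≤ i ∧ i < a0 + l <;> by_cases hbj : a0 ≤ j ∧ j < a0 + l
  · have e1 : nflF k0 a0 σ' π i = k0 + ap π (i - a0) := by
      unfold nflF; rw [if_neg (by omega), if_pos (by omega)]
    have e2 : nflF k0 a0 σ' π j = k0 + ap π (j - a0) := by
      unfold nflF; rw [if_neg (by omega), if_pos (by omega)]
    rw [e1, e2] at h
    have := ap_inj π (show i - a0 < l by omega) (show j - a0 < l by omega) (by omega)
    omega
  · exfalso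
    have h1 := (nfl_block_iff σ' π hn hl hk0 ha0 hb hi).mpr hbi
    have h2 := (nfl_block_iff σ' π hn hl hk0 ha0 hb hj)
    rw [h] at h1
    exact hbj (h2.mp h1)
  · exfalso
    have h1 := (nfl_block_iff σ' π hn hl hk0 ha0 hb hj).mpr hbj
    have h2 := (nfl_block_iff σ' π hn hl hk0 ha0 hb hi)
    rw [← h] at h1
    exact hbi (h2.mp h1)
  · rw [nfl_out (k0 := k0) σ' π hn hl ha0 hi hbi, nfl_out (k0 := k0) σ' π hn hl ha0 hj hbj] at h
    have h2 : ap σ' (cp l a0 i) = ap σ' (cp l a0 j) := by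
      have l1 := vE_lt_vE (l := l) (k0 := k0) (u := ap σ' (cp l a0 i)) (v := ap σ' (cp l a0 j))
      have l2 := vE_lt_vE (l := l) (k0 := k0) (u := ap σ' (cp l a0 j)) (v := ap σ' (cp l a0 i))
      omega
    have h3 := ap_inj σ' (cp_lt hn hl ha0 hi) (cp_lt hn hl ha0 hj) h2
    unfold cp at h3; split_ifs at h3 <;> omega

/-- the inflated permutation -/
noncomputable def nflPerm (hn : n = m + l - 1) (hl : 2 ≤ l) (hk0 : k0 < m) (ha0 : a0 < m)
    (hb : ap σ' a0 = k0) : Equiv.Perm (Fin n) :=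
  Equiv.ofBijective (fun i => ⟨nflF k0 a0 σ' π (i : ℕ), nfl_lt σ' π hn hl hk0 ha0 i.isLt⟩)
    (Finite.injective_iff_bijective.mp (fun i j h =>
      Fin.ext (nfl_inj σ' π hn hl hk0 ha0 hb i.isLt j.isLt (congrArg Fin.val h))))

lemma nflPerm_apply (i : Fin n) :
    ((nflPerm σ' π hn hl hk0 ha0 hb i : Fin n) : ℕ) = nflF k0 a0 σ' π (i : ℕ) := rfl



include hn hl hk0 ha0 hb in
lemma nflPerm_cluster : ClusterAt l (k0 + 1) (a0 + 1) (nflPerm σ' π hn hl hk0 ha0 hb) := by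
  unfold ClusterAt
  apply Finset.ext
  intro v
  simp only [Finset.mem_image, Finset.mem_filter, Finset.mem_univ, true_and, Finset.mem_Ico]
  constructor
  · rintro ⟨i, ⟨hi1, hi2⟩, rfl⟩
    have e1 : nflF k0 a0 σ' π (i : ℕ) = k0 + ap π ((i : ℕ) - a0) := by
      unfold nflF; rw [if_neg (by omega), if_pos (by omega)]
    have hap := ap_lt π (show (i : ℕ) - a0 < l by omega)
    rw [nflPerm_apply, e1]
    omega
  · intro hv
    obtain ⟨q, hq, hqv⟩ := ap_surj π (show v - 1 - k0 < l by omega)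
    refine ⟨⟨a0 + q, by omega⟩, ⟨by simp only []; omega, by simp only []; omega⟩, ?_⟩
    rw [nflPerm_apply]
    show nflF k0 a0 σ' π (a0 + q) + 1 = v
    unfold nflF; rw [if_neg (by omega), if_pos (by omega)]
    have e : a0 + q - a0 = q := by omega
    rw [e]; omega

def NoInterval (τ : Equiv.Perm (Fin 4)) : Prop :=
  ∀ B : Finset (Fin 4),
    (∀ j1 j2 j3 : Fin 4, j1 ∈ B → j2 ∈ B → j1 < j3 → j3 < j2 → j3 ∈ B) →
    (∀ j1 j2 j3 : Fin 4, j1 ∈ B → j2 ∈ B → j3 ∉ B → ¬(τ j1 < τ j3 ∧ τ j3 < τ j2)) →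
    B.card ≤ 1 ∨ B = Finset.univ

include hn hl hk0 ha0 hb in
lemma nfl_cmp_out {p p' : ℕ} (hp : p < n) (hp' : p' < n)
    (hnb : ¬((a0 ≤ p ∧ p < a0 + l) ∧ (a0 ≤ p' ∧ p' < a0 + l))) :
    (ap σ' (cp l a0 p) < ap σ' (cp l a0 p') ↔ nflF k0 a0 σ' π p < nflF k0 a0 σ' π p') := by
  by_cases h1 : a0 ≤ p ∧ p < a0 + l <;> by_cases h2 : a0 ≤ p' ∧ p' < a0 + l
  · exact absurd ⟨h1, h2⟩ hnb
  · -- p in block, p' out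
    have e1 : cp l a0 p = a0 := by unfold cp; split_ifs <;> omega
    have e2 := nfl_out (k0 := k0) σ' π hn hl ha0 hp' h2
    have h3 := (nfl_block_iff σ' π hn hl hk0 ha0 hb hp).mpr h1
    have h4 := nfl_cp_ne σ' hn hl hk0 ha0 hb hp' h2
    rw [e1, hb, e2]
    unfold vE; split_ifs <;> omega
  · have e1 : cp l a0 p' = a0 := by unfold cp; split_ifs <;> omega
    have e2 := nfl_out (k0 := k0) σ' π hn hl ha0 hp h1
    have h3 := (nfl_block_iff σ' π hn hl hk0 ha0 hb hp').mpr h2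
    have h4 := nfl_cp_ne σ' hn hl hk0 ha0 hb hp h1
    rw [e1, hb, e2]
    unfold vE; split_ifs <;> omega
  · rw [nfl_out (k0 := k0) σ' π hn hl ha0 hp h1, nfl_out (k0 := k0) σ' π hn hl ha0 hp' h2]
    exact vE_lt_vE.symm



include hn hl hk0 ha0 hb in
lemma nflPerm_avoids (τ : Equiv.Perm (Fin 4)) (hτ : NoInterval τ)
    (hσ' : Avoids ⇑σ' ⇑τ) (hπ : Avoids ⇑π ⇑τ) :
    Avoids ⇑(nflPerm σ' π hn hl hk0 ha0 hb) ⇑τ := by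
  rintro ⟨f, hf, hiff⟩
  classical
  set F := nflPerm σ' π hn hl hk0 ha0 hb with hF
  set B : Finset (Fin 4) :=
    Finset.univ.filter (fun j => a0 ≤ (f j : ℕ) ∧ (f j : ℕ) < a0 + l) with hB
  have hmemB : ∀ j, j ∈ B ↔ (a0 ≤ (f j : ℕ) ∧ (f j : ℕ) < a0 + l) := by
    intro j; simp [hB]
  have hvIff : ∀ j j' : Fin 4,
      (nflF k0 a0 σ' π ((f j : ℕ)) < nflF k0 a0 σ' π ((f j' : ℕ)) ↔ τ j < τ j') := by
    intro j j'
    have := hiff j j'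
    rw [← this]
    constructor
    · intro h; rw [Fin.lt_def, nflPerm_apply, nflPerm_apply]; exact h
    · intro h; rw [Fin.lt_def, nflPerm_apply, nflPerm_apply] at h; exact h
  have hcl : ∀ j1 j2 j3 : Fin 4, j1 ∈ B → j2 ∈ B → j1 < j3 → j3 < j2 → j3 ∈ B := by
    intro j1 j2 j3 h1 h2 h13 h32
    rw [hmemB] at h1 h2 ⊢
    have m1 := hf h13
    have m2 := hf h32
    rw [Fin.lt_def] at m1 m2
    omega
  have hbet : ∀ j1 j2 j3 : Fin 4, j1 ∈ B → j2 ∈ B → j3 ∉ B →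
      ¬(τ j1 < τ j3 ∧ τ j3 < τ j2) := by
    rintro j1 j2 j3 h1 h2 h3 ⟨hlt1, hlt2⟩
    rw [hmemB] at h1 h2
    have e1 := (hvIff j1 j3).mpr hlt1
    have e2 := (hvIff j3 j2).mpr hlt2
    have b1 := (nfl_block_iff σ' π hn hl hk0 ha0 hb (f j1).isLt).mpr h1
    have b2 := (nfl_block_iff σ' π hn hl hk0 ha0 hb (f j2).isLt).mpr h2
    have b3 := (nfl_block_iff σ' π hn hl hk0 ha0 hb (f j3).isLt).mp ⟨by omega, by omega⟩
    exact h3 ((hmemB j3).mpr b3)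
  rcases hτ B hcl hbet with hle | huniv
  · -- at most one index in the block: σ' contains τ
    have hone : ∀ j j', j ∈ B → j' ∈ B → j = j' := fun j j' hj hj' =>
      Finset.card_le_one.mp hle j hj j' hj'
    apply hσ'
    refine ⟨fun j => ⟨cp l a0 ((f j : ℕ)), cp_lt hn hl ha0 (f j).isLt⟩, ?_, ?_⟩
    · intro j j' hjj'
      have hp := hf hjj'
      rw [Fin.lt_def] at hp
      have hnb : ¬((a0 ≤ (f j : ℕ) ∧ (f j : ℕ) < a0 + l) ∧
          (a0 ≤ (f j' : ℕ) ∧ (f j' : ℕ) < a0 + l)) := by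
        rintro ⟨x, y⟩
        exact absurd (hone j j' ((hmemB j).mpr x) ((hmemB j').mpr y)) (ne_of_lt hjj')
      rw [Fin.lt_def]
      show cp l a0 _ < cp l a0 _
      unfold cp; split_ifs <;> omega
    · intro j j'
      rw [← hvIff j j']
      by_cases hjj' : j = j'
      · subst hjj'; simp
      · have hnb : ¬((a0 ≤ (f j : ℕ) ∧ (f j : ℕ) < a0 + l) ∧
            (a0 ≤ (f j' : ℕ) ∧ (f j' : ℕ) < a0 + l)) := by
          rintro ⟨x, y⟩
          exact hjj' (hone j j' ((hmemB j).mpr x) ((hmemB j').mpr y))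
        have key := nfl_cmp_out σ' π hn hl hk0 ha0 hb (f j).isLt (f j').isLt hnb
        rw [← key, Fin.lt_def]
        show (σ' ⟨cp l a0 _, _⟩ : ℕ) < (σ' ⟨cp l a0 _, _⟩ : ℕ) ↔ _
        rw [show ((σ' ⟨cp l a0 (f j : ℕ), cp_lt hn hl ha0 (f j).isLt⟩ : Fin m) : ℕ)
              = ap σ' (cp l a0 (f j : ℕ)) by
            simp [ap, cp_lt hn hl ha0 (f j).isLt],
          show ((σ' ⟨cp l a0 (f j' : ℕ), cp_lt hn hl ha0 (f j').isLt⟩ : Fin m) : ℕ)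
              = ap σ' (cp l a0 (f j' : ℕ)) by
            simp [ap, cp_lt hn hl ha0 (f j').isLt]]
  · -- all four indices in the block: π contains τ
    have hall : ∀ j : Fin 4, a0 ≤ (f j : ℕ) ∧ (f j : ℕ) < a0 + l := by
      intro j
      have : j ∈ B := huniv ▸ Finset.mem_univ j
      exact (hmemB j).mp this
    apply hπ
    refine ⟨fun j => ⟨(f j : ℕ) - a0, by have := hall j; omega⟩, ?_, ?_⟩
    · intro j j' hjj'
      have hp := hf hjj'
      rw [Fin.lt_def] at hp ⊢
      have := hall j
      have := hall j'
      simp only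
      omega
    · intro j j'
      rw [← hvIff j j']
      have e : ∀ j : Fin 4, nflF k0 a0 σ' π ((f j : ℕ)) = k0 + ap π ((f j : ℕ) - a0) := by
        intro j
        have := hall j
        unfold nflF; rw [if_neg (by omega), if_pos (by omega)]
      rw [e j, e j', Fin.lt_def]
      have b1 : ((f j : ℕ) - a0) < l := by have := hall j; omega
      have b2 : ((f j' : ℕ) - a0) < l := by have := hall j'; omega
      show (π ⟨_, _⟩ : ℕ) < (π ⟨_, _⟩ : ℕ) ↔ _
      rw [show ((π ⟨(f j : ℕ) - a0, _⟩ : Fin l) : ℕ) = ap π ((f j : ℕ) - a0) by simp [ap, b1],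
        show ((π ⟨(f j' : ℕ) - a0, _⟩ : Fin l) : ℕ) = ap π ((f j' : ℕ) - a0) by simp [ap, b2]]
      omega

end Infl

section Defl

variable {n m l k0 a0 : ℕ} (σ : Equiv.Perm (Fin n))
variable (hn : n = m + l - 1) (hl : 2 ≤ l) (hk0 : k0 < m) (ha0 : a0 < m)
variable (hblk : ∀ i, i < n → ((k0 ≤ ap σ i ∧ ap σ i < k0 + l) ↔ (a0 ≤ i ∧ i < a0 + l)))

/-- deflation: the coarse permutation, at the `ℕ` level -/
def dflF (k0 a0 l : ℕ) {n : ℕ} (σ : Equiv.Perm (Fin n)) (p : ℕ) : ℕ :=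
  vC l k0 (ap σ (pEm l a0 p))

/-- deflation: the block pattern, at the `ℕ` level -/
def dbkF (k0 a0 : ℕ) {n : ℕ} (σ : Equiv.Perm (Fin n)) (q : ℕ) : ℕ :=
  ap σ (a0 + q) - k0

include hn hl ha0 in
lemma pEm_lt {p : ℕ} (hp : p < m) : pEm l a0 p < n := by
  unfold pEm; split_ifs <;> omega

include hn hl hk0 ha0 hblk in
lemma dfl_lt {p : ℕ} (hp : p < m) : dflF k0 a0 l σ p < m := by
  have h1 := pEm_lt hn hl ha0 hp
  have h2 := ap_lt σ h1
  unfold dflF vC; split_ifs <;> omega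

include hn hl ha0 hblk in
lemma ap_pEm_bv {p : ℕ} (hp : p < m) :
    (k0 ≤ ap σ (pEm l a0 p) ∧ ap σ (pEm l a0 p) < k0 + l) ↔ p = a0 := by
  rw [hblk _ (pEm_lt hn hl ha0 hp)]
  unfold pEm; split_ifs <;> omega

include hn hl hk0 ha0 hblk in
lemma dfl_inj {p p' : ℕ} (hp : p < m) (hp' : p' < m)
    (h : dflF k0 a0 l σ p = dflF k0 a0 l σ p') : p = p' := by
  by_cases h1 : p = a0 <;> by_cases h2 : p' = a0
  · omega
  · exfalso
    have b1 := (ap_pEm_bv σ hn hl ha0 hblk hp).mpr h1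
    have b2 := (ap_pEm_bv σ hn hl ha0 hblk hp').mp
    unfold dflF at h
    unfold vC at h; split_ifs at h <;> omega
  · exfalso
    have b1 := (ap_pEm_bv σ hn hl ha0 hblk hp').mpr h2
    have b2 := (ap_pEm_bv σ hn hl ha0 hblk hp).mp
    unfold dflF at h
    unfold vC at h; split_ifs at h <;> omega
  · have b1 := (ap_pEm_bv σ hn hl ha0 hblk hp).mp
    have b2 := (ap_pEm_bv σ hn hl ha0 hblk hp').mp
    have hu : ap σ (pEm l a0 p) = ap σ (pEm l a0 p') := by
      unfold dflF at h
      unfold vC at h; split_ifs at h <;> omega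
    have := ap_inj σ (pEm_lt hn hl ha0 hp) (pEm_lt hn hl ha0 hp') hu
    unfold pEm at this; split_ifs at this <;> omega

include hn hl hk0 ha0 hblk in
lemma dbk_lt {q : ℕ} (hq : q < l) : dbkF k0 a0 σ q < l := by
  have h1 : a0 + q < n := by omega
  have := (hblk _ h1).mpr ⟨by omega, by omega⟩
  unfold dbkF; omega

include hn hl hk0 ha0 hblk in
lemma dbk_inj {q q' : ℕ} (hq : q < l) (hq' : q' < l)
    (h : dbkF k0 a0 σ q = dbkF k0 a0 σ q') : q = q' := by
  have h1 : a0 + q < n := by omega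
  have h1' : a0 + q' < n := by omega
  have b1 := (hblk _ h1).mpr ⟨by omega, by omega⟩
  have b2 := (hblk _ h1').mpr ⟨by omega, by omega⟩
  have : ap σ (a0 + q) = ap σ (a0 + q') := by unfold dbkF at h; omega
  have := ap_inj σ (by omega) (by omega) this
  omega

/-- the deflated coarse permutation -/
noncomputable def dflPerm (hn : n = m + l - 1) (hl : 2 ≤ l) (hk0 : k0 < m) (ha0 : a0 < m)
    (hblk : ∀ i, i < n → ((k0 ≤ ap σ i ∧ ap σ i < k0 + l) ↔ (a0 ≤ i ∧ i < a0 + l))) :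
    Equiv.Perm (Fin m) :=
  Equiv.ofBijective (fun p => ⟨dflF k0 a0 l σ (p : ℕ), dfl_lt σ hn hl hk0 ha0 hblk p.isLt⟩)
    (Finite.injective_iff_bijective.mp (fun p p' h =>
      Fin.ext (dfl_inj σ hn hl hk0 ha0 hblk p.isLt p'.isLt (congrArg Fin.val h))))

/-- the deflated block pattern -/
noncomputable def dbkPerm (hn : n = m + l - 1) (hl : 2 ≤ l) (hk0 : k0 < m) (ha0 : a0 < m)
    (hblk : ∀ i, i < n → ((k0 ≤ ap σ i ∧ ap σ i < k0 + l) ↔ (a0 ≤ i ∧ i < a0 + l))) :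
    Equiv.Perm (Fin l) :=
  Equiv.ofBijective (fun q => ⟨dbkF k0 a0 σ (q : ℕ), dbk_lt σ hn hl hk0 ha0 hblk q.isLt⟩)
    (Finite.injective_iff_bijective.mp (fun q q' h =>
      Fin.ext (dbk_inj σ hn hl hk0 ha0 hblk q.isLt q'.isLt (congrArg Fin.val h))))

lemma dflPerm_ap {p : ℕ} (hp : p < m) :
    ap (dflPerm σ hn hl hk0 ha0 hblk) p = dflF k0 a0 l σ p := by
  simp only [ap, dif_pos hp]; rfl

lemma dbkPerm_ap {q : ℕ} (hq : q < l) :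
    ap (dbkPerm σ hn hl hk0 ha0 hblk) q = dbkF k0 a0 σ q := by
  simp only [ap, dif_pos hq]; rfl

include hblk in
lemma dflPerm_a0 : ap (dflPerm σ hn hl hk0 ha0 hblk) a0 = k0 := by
  rw [dflPerm_ap σ hn hl hk0 ha0 hblk ha0]
  have e : pEm l a0 a0 = a0 := by unfold pEm; split_ifs <;> omega
  have b := (hblk a0 (by omega)).mpr ⟨le_refl _, by omega⟩
  unfold dflF; rw [e]
  unfold vC; split_ifs <;> omega

include hblk in
lemma nfl_dfl {i : ℕ} (hi : i < n) :
    nflF k0 a0 (dflPerm σ hn hl hk0 ha0 hblk) (dbkPerm σ hn hl hk0 ha0 hblk) i = ap σ i := by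
  unfold nflF
  split_ifs with h1 h2
  · rw [dflPerm_ap σ hn hl hk0 ha0 hblk (by omega)]
    have e : pEm l a0 i = i := by unfold pEm; split_ifs <;> omega
    have hout : ¬(k0 ≤ ap σ i ∧ ap σ i < k0 + l) := by
      rw [hblk i hi]; omega
    unfold dflF; rw [e]
    unfold vE vC; split_ifs <;> omega
  · rw [dbkPerm_ap σ hn hl hk0 ha0 hblk (by omega)]
    have e : a0 + (i - a0) = i := by omega
    have hin := (hblk i hi).mpr ⟨by omega, by omega⟩
    unfold dbkF; rw [e]; omega
  · rw [dflPerm_ap σ hn hl hk0 ha0 hblk (by omega)]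
    have e : pEm l a0 (i - (l - 1)) = i := by unfold pEm; split_ifs <;> omega
    have hout : ¬(k0 ≤ ap σ i ∧ ap σ i < k0 + l) := by
      rw [hblk i hi]; omega
    unfold dflF; rw [e]
    unfold vE vC; split_ifs <;> omega

end Defl

section Recov

variable {n m l k0 a0 : ℕ} (σ' : Equiv.Perm (Fin m)) (π : Equiv.Perm (Fin l))
variable (hn : n = m + l - 1) (hl : 2 ≤ l) (hk0 : k0 < m) (ha0 : a0 < m)
  (hb : ap σ' a0 = k0)

include hn hl hk0 ha0 hb in
lemma dfl_nfl {p : ℕ} (hp : p < m) :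
    dflF k0 a0 l (nflPerm σ' π hn hl hk0 ha0 hb) p = ap σ' p := by
  have hap : ∀ i : ℕ, i < n → ap (nflPerm σ' π hn hl hk0 ha0 hb) i = nflF k0 a0 σ' π i := by
    intro i hi; simp only [ap, dif_pos hi]; rfl
  unfold dflF
  rcases lt_trichotomy p a0 with h | h | h
  · have e : pEm l a0 p = p := by unfold pEm; split_ifs <;> omega
    rw [e, hap p (by omega)]
    unfold nflF; rw [if_pos h]
    exact vC_vE (by omega)
  · rw [h]
    have e : pEm l a0 a0 = a0 := by unfold pEm; split_ifs <;> omega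
    rw [e, hap a0 (by omega)]
    have e2 : nflF k0 a0 σ' π a0 = k0 + ap π (a0 - a0) := by
      unfold nflF; rw [if_neg (by omega), if_pos (by omega)]
    rw [e2, hb]
    have := ap_lt π (show a0 - a0 < l by omega)
    unfold vC; split_ifs <;> omega
  · have e : pEm l a0 p = p + (l - 1) := by unfold pEm; split_ifs <;> omega
    rw [e, hap (p + (l - 1)) (by omega)]
    have e2 : nflF k0 a0 σ' π (p + (l - 1)) = vE l k0 (ap σ' (p + (l - 1) - (l - 1))) := by
      unfold nflF; rw [if_neg (by omega), if_neg (by omega)]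
    have e3 : p + (l - 1) - (l - 1) = p := by omega
    rw [e2, e3]
    exact vC_vE (by omega)

include hn hl hk0 ha0 hb in
lemma dbk_nfl {q : ℕ} (hq : q < l) :
    dbkF k0 a0 (nflPerm σ' π hn hl hk0 ha0 hb) q = ap π q := by
  have hap : ap (nflPerm σ' π hn hl hk0 ha0 hb) (a0 + q) = nflF k0 a0 σ' π (a0 + q) := by
    simp only [ap, dif_pos (show a0 + q < n by omega)]; rfl
  unfold dbkF
  rw [hap]
  have e2 : nflF k0 a0 σ' π (a0 + q) = k0 + ap π (a0 + q - a0) := by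
    unfold nflF; rw [if_neg (by omega), if_pos (by omega)]
  have e3 : a0 + q - a0 = q := by omega
  rw [e2, e3]; omega

end Recov

section DeflAvoid

variable {n m l k0 a0 : ℕ} (σ : Equiv.Perm (Fin n))
variable (hn : n = m + l - 1) (hl : 2 ≤ l) (hk0 : k0 < m) (ha0 : a0 < m)
variable (hblk : ∀ i, i < n → ((k0 ≤ ap σ i ∧ ap σ i < k0 + l) ↔ (a0 ≤ i ∧ i < a0 + l)))

include hn hl hk0 ha0 hblk in
lemma dflPerm_avoids {s : ℕ} (τ : Equiv.Perm (Fin s)) (hσ : Avoids ⇑σ ⇑τ) :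
    Avoids ⇑(dflPerm σ hn hl hk0 ha0 hblk) ⇑τ := by
  rintro ⟨f, hf, hiff⟩
  apply hσ
  refine ⟨fun j => ⟨pEm l a0 ((f j : ℕ)), pEm_lt hn hl ha0 (f j).isLt⟩, ?_, ?_⟩
  · intro j j' hjj'
    have hp := hf hjj'
    rw [Fin.lt_def] at hp ⊢
    show pEm l a0 _ < pEm l a0 _
    unfold pEm; split_ifs <;> omega
  · intro j j'
    rw [← hiff j j']
    simp only [Fin.lt_def]
    by_cases hjj' : j = j'
    · subst hjj'; simp
    · have hne : (f j : ℕ) ≠ (f j' : ℕ) := by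
        intro he
        exact hjj' (hf.injective (Fin.ext he))
      have hnb : ¬((k0 ≤ ap σ (pEm l a0 (f j : ℕ)) ∧ ap σ (pEm l a0 (f j : ℕ)) < k0 + l) ∧
          (k0 ≤ ap σ (pEm l a0 (f j' : ℕ)) ∧ ap σ (pEm l a0 (f j' : ℕ)) < k0 + l)) := by
        rintro ⟨x, y⟩
        rw [ap_pEm_bv σ hn hl ha0 hblk (f j).isLt] at x
        rw [ap_pEm_bv σ hn hl ha0 hblk (f j').isLt] at y
        exact hne (x.trans y.symm)
      have key := vC_lt_out (l := l) (k0 := k0) hnb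
      have e1 : ((σ (⟨pEm l a0 ((f j : ℕ)), pEm_lt hn hl ha0 (f j).isLt⟩ : Fin n)) : ℕ)
          = ap σ (pEm l a0 (f j : ℕ)) := by simp [ap, pEm_lt hn hl ha0 (f j).isLt]
      have e2 : ((σ (⟨pEm l a0 ((f j' : ℕ)), pEm_lt hn hl ha0 (f j').isLt⟩ : Fin n)) : ℕ)
          = ap σ (pEm l a0 (f j' : ℕ)) := by simp [ap, pEm_lt hn hl ha0 (f j').isLt]
      have d1 : (((dflPerm σ hn hl hk0 ha0 hblk) (f j)) : ℕ)
          = vC l k0 (ap σ (pEm l a0 (f j : ℕ))) := rfl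
      have d2 : (((dflPerm σ hn hl hk0 ha0 hblk) (f j')) : ℕ)
          = vC l k0 (ap σ (pEm l a0 (f j' : ℕ))) := rfl
      rw [e1, e2, d1, d2]
      exact key.symm

include hn hl hk0 ha0 hblk in
lemma dbkPerm_avoids {s : ℕ} (τ : Equiv.Perm (Fin s)) (hσ : Avoids ⇑σ ⇑τ) :
    Avoids ⇑(dbkPerm σ hn hl hk0 ha0 hblk) ⇑τ := by
  rintro ⟨f, hf, hiff⟩
  apply hσ
  refine ⟨fun j => ⟨a0 + (f j : ℕ), by have := (f j).isLt; omega⟩, ?_, ?_⟩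
  · intro j j' hjj'
    have hp := hf hjj'
    rw [Fin.lt_def] at hp ⊢
    simp only
    omega
  · intro j j'
    rw [← hiff j j']
    simp only [Fin.lt_def]
    have hlt1 : a0 + (f j : ℕ) < n := by have := (f j).isLt; omega
    have hlt2 : a0 + (f j' : ℕ) < n := by have := (f j').isLt; omega
    have e1 : ((σ (⟨a0 + (f j : ℕ), hlt1⟩ : Fin n)) : ℕ) = ap σ (a0 + (f j : ℕ)) := by
      simp [ap, hlt1]
    have e2 : ((σ (⟨a0 + (f j' : ℕ), hlt2⟩ : Fin n)) : ℕ) = ap σ (a0 + (f j' : ℕ)) := by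
      simp [ap, hlt2]
    have d1 : (((dbkPerm σ hn hl hk0 ha0 hblk) (f j)) : ℕ) = dbkF k0 a0 σ (f j : ℕ) := rfl
    have d2 : (((dbkPerm σ hn hl hk0 ha0 hblk) (f j')) : ℕ) = dbkF k0 a0 σ (f j' : ℕ) := rfl
    rw [e1, e2, d1, d2]
    have b1 := (hblk (a0 + (f j : ℕ)) hlt1).mpr ⟨by omega, by have := (f j).isLt; omega⟩
    have b2 := (hblk (a0 + (f j' : ℕ)) hlt2).mpr ⟨by omega, by have := (f j').isLt; omega⟩
    unfold dbkF
    omega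

end DeflAvoid

lemma clusterAt_blk {n m l k0 a0 : ℕ} (σ : Equiv.Perm (Fin n))
    (hn : n = m + l - 1) (hl : 2 ≤ l) (hk0 : k0 < m) (ha0 : a0 < m)
    (h : ClusterAt l (k0 + 1) (a0 + 1) σ) :
    ∀ i, i < n → ((k0 ≤ ap σ i ∧ ap σ i < k0 + l) ↔ (a0 ≤ i ∧ i < a0 + l)) := by
  intro i hi
  unfold ClusterAt at h
  have him : ∀ v : ℕ, (∃ i' : Fin n, (a0 + 1 ≤ (i' : ℕ) + 1 ∧ (i' : ℕ) + 1 < a0 + 1 + l) ∧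
      (σ i' : ℕ) + 1 = v) ↔ (k0 + 1 ≤ v ∧ v < k0 + 1 + l) := by
    intro v
    constructor
    · rintro ⟨i', hc, rfl⟩
      have : (σ i' : ℕ) + 1 ∈ Finset.Ico (k0 + 1) (k0 + 1 + l) := by
        rw [← h]
        exact Finset.mem_image.mpr ⟨i', Finset.mem_filter.mpr ⟨Finset.mem_univ _, hc⟩, rfl⟩
      rw [Finset.mem_Ico] at this
      exact this
    · intro hv
      have : v ∈ Finset.Ico (k0 + 1) (k0 + 1 + l) := Finset.mem_Ico.mpr hv
      rw [← h] at this
      obtain ⟨i', hi', he⟩ := Finset.mem_image.mp this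
      exact ⟨i', (Finset.mem_filter.mp hi').2, he⟩
  have hap : ap σ i = (σ ⟨i, hi⟩ : ℕ) := by simp [ap, hi]
  constructor
  · rintro ⟨h1, h2⟩
    by_contra hout
    obtain ⟨i', hc, he⟩ := (him (ap σ i + 1)).mpr ⟨by omega, by omega⟩
    have : σ i' = σ ⟨i, hi⟩ := Fin.ext (by rw [← hap]; omega)
    have := σ.injective this
    have : (i' : ℕ) = i := congrArg Fin.val this
    omega
  · rintro ⟨h1, h2⟩
    have := (him (ap σ i + 1)).mp ⟨⟨i, hi⟩, ⟨by simp only [Fin.val_mk]; omega, by simp only [Fin.val_mk]; omega⟩, by rw [hap]⟩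
    omega




set_option maxHeartbeats 1000000 in
set_option synthInstance.maxSize 512 in
set_option synthInstance.maxHeartbeats 400000 in
lemma p2413_noInt : NoInterval p2413 := by unfold NoInterval; decide

set_option maxHeartbeats 1000000 in
set_option synthInstance.maxSize 512 in
set_option synthInstance.maxHeartbeats 400000 in
lemma p3142_noInt : NoInterval p3142 := by unfold NoInterval; decide

/-- exact count (and probability) for separable permutations. -/
theorem separable_cluster_exact (n : ℕ) (hn : 3 ≤ n) (l : ℕ) (hl2 : 2 ≤ l) (hln : l ≤ n - 1)
    (k : ℕ) (hk1 : 1 ≤ k) (hk2 : k ≤ n - l + 1) :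
    (ClusterEvent n l k ∩ SepSet n).ncard = (SepSet (n - l + 1)).ncard * (SepSet l).ncard ∧
    ((ClusterEvent n l k ∩ SepSet n).ncard : ℝ) / ((SepSet n).ncard : ℝ) =
      (((SepSet (n - l + 1)).ncard * (SepSet l).ncard : ℕ) : ℝ) / ((SepSet n).ncard : ℝ) := by

  classical
  set m := n - l + 1 with hmdef
  have hnm : n = m + l - 1 := by omega
  have hm2 : 2 ≤ m := by omega
  have hk0 : k - 1 < m := by omega
  set k0 := k - 1 with hk0def
  have hkk : k = k0 + 1 := by omega
  set Φ : Equiv.Perm (Fin m) × Equiv.Perm (Fin l) → Equiv.Perm (Fin n) := fun x =>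
    nflPerm x.1 x.2 hnm hl2 hk0 (x.1⁻¹ ⟨k0, hk0⟩).isLt
      (by rw [ap_fin]; simp) with hΦ
  have hbij : Set.BijOn Φ ((SepSet m) ×ˢ (SepSet l)) (ClusterEvent n l k ∩ SepSet n) := by
    refine ⟨?_, ?_, ?_⟩
    · -- MapsTo
      rintro ⟨σ', π⟩ ⟨hσ', hπ⟩
      constructor
      · refine ⟨((σ'⁻¹ ⟨k0, hk0⟩ : Fin m) : ℕ) + 1, by omega, ?_, ?_⟩
        · have := (σ'⁻¹ ⟨k0, hk0⟩).isLt; omega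
        · rw [hkk]
          exact nflPerm_cluster σ' π hnm hl2 hk0 (σ'⁻¹ ⟨k0, hk0⟩).isLt _
      · exact ⟨nflPerm_avoids σ' π hnm hl2 hk0 _ _ p2413 p2413_noInt hσ'.1 hπ.1,
          nflPerm_avoids σ' π hnm hl2 hk0 _ _ p3142 p3142_noInt hσ'.2 hπ.2⟩
    · -- InjOn
      rintro ⟨σ1, π1⟩ h1 ⟨σ2, π2⟩ h2 heq
      simp only [hΦ] at heq
      have hb1 : ap σ1 ((σ1⁻¹ ⟨k0, hk0⟩ : Fin m) : ℕ) = k0 := by rw [ap_fin]; simp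
      have hb2 : ap σ2 ((σ2⁻¹ ⟨k0, hk0⟩ : Fin m) : ℕ) = k0 := by rw [ap_fin]; simp
      set a1 := ((σ1⁻¹ ⟨k0, hk0⟩ : Fin m) : ℕ) with ha1def
      set a2 := ((σ2⁻¹ ⟨k0, hk0⟩ : Fin m) : ℕ) with ha2def
      have ha1 : a1 < m := (σ1⁻¹ ⟨k0, hk0⟩).isLt
      have ha2 : a2 < m := (σ2⁻¹ ⟨k0, hk0⟩).isLt
      have hval : ∀ i : ℕ, (hi : i < n) → nflF k0 a1 σ1 π1 i = nflF k0 a2 σ2 π2 i := by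
        intro i hi
        exact congrArg (fun (e : Equiv.Perm (Fin n)) => ((e ⟨i, hi⟩ : Fin n) : ℕ)) heq
      have ha12 : a1 = a2 := by
        have b1 := (nfl_block_iff σ1 π1 hnm hl2 hk0 ha1 hb1 (show a1 < n by omega)).mpr
          ⟨le_refl _, by omega⟩
        rw [hval a1 (by omega)] at b1
        have c1 := (nfl_block_iff σ2 π2 hnm hl2 hk0 ha2 hb2 (show a1 < n by omega)).mp b1
        have b2 := (nfl_block_iff σ2 π2 hnm hl2 hk0 ha2 hb2 (show a2 < n by omega)).mpr
          ⟨le_refl _, by omega⟩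
        rw [← hval a2 (by omega)] at b2
        have c2 := (nfl_block_iff σ1 π1 hnm hl2 hk0 ha1 hb1 (show a2 < n by omega)).mp b2
        omega
      have hσ12 : σ1 = σ2 := by
        apply Equiv.ext; intro p; apply Fin.ext
        have r1 := dfl_nfl σ1 π1 hnm hl2 hk0 ha1 hb1 p.isLt
        have r2 := dfl_nfl σ2 π2 hnm hl2 hk0 ha2 hb2 p.isLt
        rw [← ap_fin σ1 p, ← ap_fin σ2 p, ← r1, ← r2, heq, ha12]
      have hπ12 : π1 = π2 := by
        apply Equiv.ext; intro q; apply Fin.ext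
        have r1 := dbk_nfl σ1 π1 hnm hl2 hk0 ha1 hb1 q.isLt
        have r2 := dbk_nfl σ2 π2 hnm hl2 hk0 ha2 hb2 q.isLt
        rw [← ap_fin π1 q, ← ap_fin π2 q, ← r1, ← r2, heq, ha12]
      rw [Prod.ext_iff]
      exact ⟨hσ12, hπ12⟩
    · -- SurjOn
      rintro σ ⟨⟨a, haa1, haa2, hca⟩, hsep⟩
      have ha0m : a - 1 < m := by omega
      have hca' : ClusterAt l (k0 + 1) ((a - 1) + 1) σ := by
        rw [← hkk]
        have : a - 1 + 1 = a := by omega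
        rw [this]
        exact hca
      have hblk := clusterAt_blk σ hnm hl2 hk0 ha0m hca'
      set σ' := dflPerm σ hnm hl2 hk0 ha0m hblk with hσ'def
      set π := dbkPerm σ hnm hl2 hk0 ha0m hblk with hπdef
      refine ⟨(σ', π), ⟨⟨dflPerm_avoids σ hnm hl2 hk0 ha0m hblk p2413 hsep.1,
        dflPerm_avoids σ hnm hl2 hk0 ha0m hblk p3142 hsep.2⟩,
        ⟨dbkPerm_avoids σ hnm hl2 hk0 ha0m hblk p2413 hsep.1,
        dbkPerm_avoids σ hnm hl2 hk0 ha0m hblk p3142 hsep.2⟩⟩, ?_⟩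
      have ha0σ' : ((σ'⁻¹ ⟨k0, hk0⟩ : Fin m) : ℕ) = a - 1 := by
        have e1 : σ' ⟨a - 1, ha0m⟩ = ⟨k0, hk0⟩ := by
          apply Fin.ext
          rw [← ap_fin σ' ⟨a - 1, ha0m⟩]
          exact dflPerm_a0 σ hnm hl2 hk0 ha0m hblk
        rw [← e1]
        simp
      simp only [hΦ]
      apply Equiv.ext; intro i; apply Fin.ext
      show nflF k0 ((σ'⁻¹ ⟨k0, hk0⟩ : Fin m) : ℕ) σ' π (i : ℕ) = ((σ i : Fin n) : ℕ)
      rw [ha0σ', ← ap_fin σ i]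
      exact nfl_dfl σ hnm hl2 hk0 ha0m hblk i.isLt
  have hcount : (ClusterEvent n l k ∩ SepSet n).ncard = ((SepSet m) ×ˢ (SepSet l)).ncard := by
    rw [← hbij.image_eq]
    exact Set.ncard_image_of_injOn hbij.injOn
  have hprod : ((SepSet m) ×ˢ (SepSet l)).ncard = (SepSet m).ncard * (SepSet l).ncard := by
    rw [← Nat.card_coe_set_eq, ← Nat.card_coe_set_eq, ← Nat.card_coe_set_eq]
    rw [Nat.card_congr (Equiv.Set.prod _ _)]
    exact Nat.card_prod _ _
  refine ⟨hcount.trans hprod, ?_⟩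
  rw [hcount.trans hprod]
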